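/- Let A_f = C_α be the companion matrix of a monic real polynomial α(z) = α_0 + α_1 z + ⋯ + α_{l-1} z^{l-1} + z^l of degree l ≥ 1 with all coefficients α_0, …, α_{l-1} ≤ 0, and let B_f = e_l be the last standard unit vector. If C_f ∈ ℝ^{1×l} satisfies C_f·A_f^ν·B_f ≤ 0 for ν = 0, 1, …, l-1, then C_f·A_f^ν·B_f ≤ 0 for all ν ∈ ℕ. -/

import Mathlib

/-- Companion matrix of the monic polynomial `z^l + a_{l-1} z^{l-1} + ⋯ + a_0`:
ones on the superdiagonal and last row `(-a_0, …, -a_{l-1})`. -/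
def companionMatrix {l : ℕ} (a : Fin l → ℝ) : Matrix (Fin l) (Fin l) ℝ :=
  Matrix.of fun i j =>
    (if (i : ℕ) + 1 = (j : ℕ) then (1 : ℝ) else 0) +
    (if (i : ℕ) = l - 1 then -a j else 0)

/-- The last standard unit vector, as a column matrix. -/
def lastUnitCol (l : ℕ) : Matrix (Fin l) (Fin 1) ℝ :=
  Matrix.of fun i _ => if (i : ℕ) = l - 1 then (1 : ℝ) else 0

namespace MarkovAux

/-- Totalized coefficient function. -/
noncomputable def a' {l : ℕ} (a : Fin l → ℝ) : ℕ → ℝ :=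
  fun n => if h : n < l then a ⟨n, h⟩ else 0

lemma a'_nonpos {l : ℕ} (a : Fin l → ℝ) (ha : ∀ j, a j ≤ 0) (n : ℕ) : a' a n ≤ 0 := by
  unfold a'; split <;> simp [ha _]

/-- Standard basis column vector. -/
def E (l : ℕ) (j : ℕ) : Matrix (Fin l) (Fin 1) ℝ :=
  Matrix.of fun i _ => if (i : ℕ) = j then 1 else 0

lemma lastUnitCol_eq (l : ℕ) : lastUnitCol l = E l (l - 1) := rfl

lemma mulE {l : ℕ} (a : Fin l → ℝ) (j : ℕ) (hj : j < l) :
    companionMatrix a * E l j =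
      (if j = 0 then 0 else E l (j - 1)) + (-(a' a j)) • E l (l - 1) := by
  ext i k
  have hsum : (companionMatrix a * E l j) i k = companionMatrix a i ⟨j, hj⟩ := by
    rw [Matrix.mul_apply]
    rw [Finset.sum_eq_single (⟨j, hj⟩ : Fin l)]
    · simp [E]
    · intro b _ hb
      have : (b : ℕ) ≠ j := fun hbj => hb (Fin.ext hbj)
      simp [E, this]
    · simp
  rw [hsum]
  simp only [companionMatrix, E, Matrix.of_apply, Matrix.add_apply, Matrix.smul_apply,
    Matrix.zero_apply, smul_eq_mul, a']
  rw [dif_pos hj]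
  by_cases hj0 : j = 0
  · subst hj0
    simp only [if_pos rfl, Matrix.zero_apply, zero_add]
    have : ¬ ((i : ℕ) + 1 = 0) := by omega
    rw [if_neg this, zero_add]
    by_cases hil : (i : ℕ) = l - 1 <;> simp [hil]
  · rw [if_neg hj0]
    simp only [Matrix.of_apply]
    have : ((i : ℕ) + 1 = j) ↔ ((i : ℕ) = j - 1) := by omega
    by_cases hi1 : (i : ℕ) = j - 1
    · rw [if_pos (this.mpr hi1), if_pos hi1]
      by_cases hil : (i : ℕ) = l - 1 <;> simp [hil]
    · rw [if_neg (fun hh => hi1 (this.mp hh)), if_neg hi1]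
      by_cases hil : (i : ℕ) = l - 1 <;> simp [hil]

lemma chain {l : ℕ} (a : Fin l → ℝ) (hl : 1 ≤ l) :
    ∀ k, k ≤ l - 1 →
      E l (l - 1 - k) = (companionMatrix a) ^ k * E l (l - 1) +
        ∑ i ∈ Finset.range k, a' a (l - k + i) • ((companionMatrix a) ^ i * E l (l - 1)) := by
  intro k
  induction k with
  | zero => intro _; simp
  | succ k ih =>
    intro hk
    have hk' : k ≤ l - 1 := by omega
    have hIH := ih hk'
    have hjpos : l - 1 - k ≠ 0 := by omega
    have hjlt : l - 1 - k < l := by omega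
    have hmul := mulE a (l - 1 - k) hjlt
    rw [if_neg hjpos] at hmul
    -- E (l-1-k-1) = A * E (l-1-k) + a'(l-1-k) • E(l-1)
    have hstep : E l (l - 1 - (k + 1)) =
        companionMatrix a * E l (l - 1 - k) + a' a (l - 1 - k) • E l (l - 1) := by
      have h1 : l - 1 - (k + 1) = l - 1 - k - 1 := by omega
      rw [h1, hmul]
      module
    rw [hstep, hIH]
    rw [Matrix.mul_add, Matrix.mul_sum]
    rw [Finset.sum_range_succ']
    have hre : ∀ i : ℕ, l - (k + 1) + (i + 1) = l - k + i := by omega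
    have hre0 : l - (k + 1) + 0 = l - 1 - k := by omega
    rw [hre0]
    have : ∀ i ∈ Finset.range k,
        companionMatrix a * (a' a (l - k + i) • ((companionMatrix a) ^ i * E l (l - 1))) =
        a' a (l - (k + 1) + (i + 1)) • ((companionMatrix a) ^ (i + 1) * E l (l - 1)) := by
      intro i _
      rw [hre i, Matrix.mul_smul, ← Matrix.mul_assoc, ← pow_succ']
    rw [Finset.sum_congr rfl this]
    rw [← Matrix.mul_assoc, ← pow_succ', pow_zero, Matrix.one_mul]
    abel

lemma key {l : ℕ} (a : Fin l → ℝ) (hl : 1 ≤ l) :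
    (companionMatrix a) ^ l * E l (l - 1) +
      ∑ j ∈ Finset.range l, a' a j • ((companionMatrix a) ^ j * E l (l - 1)) = 0 := by
  have hch := chain a hl (l - 1) le_rfl
  have h0 : l - 1 - (l - 1) = 0 := by omega
  rw [h0] at hch
  have hmul0 := mulE a 0 (by omega)
  rw [if_pos rfl, zero_add] at hmul0
  have happ := congrArg (fun M => companionMatrix a * M) hch
  simp only [hmul0, Matrix.mul_add, Matrix.mul_sum] at happ
  have hre : ∀ i : ℕ, l - (l - 1) + i = i + 1 := by omega
  have hsum : ∀ i ∈ Finset.range (l - 1),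
      companionMatrix a * (a' a (l - (l - 1) + i) • ((companionMatrix a) ^ i * E l (l - 1))) =
      a' a (i + 1) • ((companionMatrix a) ^ (i + 1) * E l (l - 1)) := by
    intro i _
    rw [hre i, Matrix.mul_smul, ← Matrix.mul_assoc, ← pow_succ']
  rw [Finset.sum_congr rfl hsum, ← Matrix.mul_assoc, ← pow_succ'] at happ
  have hl1 : l - 1 + 1 = l := by omega
  rw [hl1] at happ
  have hsplit : ∑ j ∈ Finset.range l, a' a j • ((companionMatrix a) ^ j * E l (l - 1)) =
      ∑ i ∈ Finset.range (l - 1), a' a (i + 1) • ((companionMatrix a) ^ (i + 1) * E l (l - 1)) +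
        a' a 0 • ((companionMatrix a) ^ 0 * E l (l - 1)) := by
    have hrg : Finset.range l = Finset.range ((l - 1) + 1) := by rw [hl1]
    rw [hrg, Finset.sum_range_succ']
  rw [hsplit, pow_zero, Matrix.one_mul]
  linear_combination (norm := module) -happ

end MarkovAux

theorem markov_parameters_nonpos
    (l : ℕ) (hl : 1 ≤ l) (a : Fin l → ℝ) (ha : ∀ j, a j ≤ 0)
    (Cf : Matrix (Fin 1) (Fin l) ℝ)
    (h : ∀ ν : ℕ, ν < l → (Cf * companionMatrix a ^ ν * lastUnitCol l) 0 0 ≤ 0) :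
    ∀ ν : ℕ, (Cf * companionMatrix a ^ ν * lastUnitCol l) 0 0 ≤ 0 := by
  intro ν
  induction ν using Nat.strong_induction_on with
  | _ ν ih =>
    by_cases hν : ν < l
    · exact h ν hν
    · push_neg at hν
      set A := companionMatrix a with hA
      have hkey : A ^ l * lastUnitCol l =
          - ∑ j ∈ Finset.range l, MarkovAux.a' a j • (A ^ j * lastUnitCol l) := by
        rw [MarkovAux.lastUnitCol_eq]
        have := MarkovAux.key a hl
        linear_combination (norm := module) this
      have hν' : ν = (ν - l) + l := by omega
      rw [hν', pow_add, Matrix.mul_assoc Cf, Matrix.mul_assoc (A ^ (ν - l)), hkey]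
      rw [Matrix.mul_neg, Matrix.mul_sum, Matrix.mul_neg, Matrix.mul_sum]
      simp only [Matrix.mul_smul]
      rw [Matrix.neg_apply, Matrix.sum_apply]
      simp only [Matrix.smul_apply, smul_eq_mul]
      rw [neg_nonpos]
      apply Finset.sum_nonneg
      intro j hj
      rw [Finset.mem_range] at hj
      have h1 : MarkovAux.a' a j ≤ 0 := MarkovAux.a'_nonpos a ha j
      have h2 : (Cf * (A ^ (ν - l) * (A ^ j * lastUnitCol l))) 0 0 ≤ 0 := by
        have := ih (ν - l + j) (by omega)
        rw [pow_add, Matrix.mul_assoc, Matrix.mul_assoc] at this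
        exact this
      calc (0:ℝ) = (-MarkovAux.a' a j) * (-(Cf * (A ^ (ν - l) * (A ^ j * lastUnitCol l))) 0 0) * 0 := by ring
        _ ≤ _ := by nlinarith [mul_nonneg (neg_nonneg.2 h1) (neg_nonneg.2 h2)]
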